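/- Let μ > 0 and λ + 2μ > μ. Then ∑_{n=1}^{⌊Λ/(λ+2μ)⌋} r₂(n) = (π/(λ+2μ))·Λ + o(Λ) as Λ → +∞; hence the difference of the 3D cylinder counting functions satisfies N_FD(Λ) − N_DF(Λ) = (π/(λ+2μ))·Λ + o(Λ) as Λ → +∞. -/

import Mathlib

open Filter Finset MeasureTheory Metric
open scoped ENNReal NNReal Topology

/-- `r₂(n)` is the number of representations of `n` as an ordered sum of two squares
of integers. -/
noncomputable def r2 (n : ℕ) : ℕ :=
  ((Finset.Icc (-(n : ℤ)) (n : ℤ) ×ˢ Finset.Icc (-(n : ℤ)) (n : ℤ)).filter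
    (fun p => p.1 ^ 2 + p.2 ^ 2 = (n : ℤ))).card

/-- The eigenvalue counting function of the Dirichlet-free problem on the 3D flat
cylinder of height `h`. -/
noncomputable def NDF3 (lam mu h Λ : ℝ) : ℝ :=
  (⌊h / Real.pi * Real.sqrt (Λ / (lam + 2 * mu))⌋ : ℝ)
  + ∑ n ∈ Finset.Icc 1 ⌊Λ / mu⌋₊,
      (r2 n : ℝ) * (2 * (⌊h / Real.pi * Real.sqrt (Λ / mu - (n : ℝ))⌋ : ℝ) + 1)
  + ∑ n ∈ Finset.Icc 1 ⌊Λ / (lam + 2 * mu)⌋₊,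
      (r2 n : ℝ) * (⌊h / Real.pi * Real.sqrt (Λ / (lam + 2 * mu) - (n : ℝ))⌋ : ℝ)

/-- The eigenvalue counting function of the free-Dirichlet problem on the 3D flat
cylinder of height `h`. -/
noncomputable def NFD3 (lam mu h Λ : ℝ) : ℝ :=
  NDF3 lam mu h Λ + ∑ n ∈ Finset.Icc 1 ⌊Λ / (lam + 2 * mu)⌋₊, (r2 n : ℝ)

section Aux

noncomputable def pts (N : ℕ) : Finset (ℤ × ℤ) :=
  (Finset.Icc (-(N : ℤ)) (N : ℤ) ×ˢ Finset.Icc (-(N : ℤ)) (N : ℤ)).filter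
    (fun p => p.1 ^ 2 + p.2 ^ 2 ≤ (N : ℤ))

lemma mem_box_of_sq_le {a : ℤ} {n : ℤ} (h : a ^ 2 ≤ n) : -n ≤ a ∧ a ≤ n := by
  have h1 : (a.natAbs : ℤ) ≤ n := (Int.natAbs_le_self_sq a).trans h
  have h2 : |a| ≤ n := by rwa [Int.abs_eq_natAbs]
  exact abs_le.mp h2

lemma card_pts (N : ℕ) : (pts N).card = 1 + ∑ n ∈ Finset.Icc 1 N, r2 n := by
  have hfib : ∀ p ∈ pts N, (p.1 ^ 2 + p.2 ^ 2).toNat ∈ Finset.Icc 0 N := by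
    rintro ⟨a, b⟩ hp
    simp only [pts, Finset.mem_filter] at hp
    simp only [Finset.mem_Icc, Nat.zero_le, true_and, Int.toNat_le]
    exact hp.2
  rw [Finset.card_eq_sum_card_fiberwise hfib]
  have h0 : Finset.Icc 0 N = insert 0 (Finset.Icc 1 N) := by
    ext m; simp [Finset.mem_Icc]; omega
  rw [h0, Finset.sum_insert (by simp)]
  congr 1
  · have : (pts N).filter (fun p => (p.1 ^ 2 + p.2 ^ 2).toNat = 0) = {(0, 0)} := by
      ext ⟨a, b⟩
      simp only [pts, Finset.mem_filter, Finset.mem_product, Finset.mem_Icc,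
        Finset.mem_singleton, Prod.mk.injEq]
      constructor
      · rintro ⟨-, h⟩
        have ha := sq_nonneg a; have hb := sq_nonneg b
        have h2 : a ^ 2 + b ^ 2 = 0 := by
          have : 0 ≤ a ^ 2 + b ^ 2 := by positivity
          omega
        exact ⟨sq_eq_zero_iff.mp (by nlinarith), sq_eq_zero_iff.mp (by nlinarith)⟩
      · rintro ⟨rfl, rfl⟩
        have : (0:ℤ) ≤ (N:ℤ) := Int.natCast_nonneg N
        norm_num
    rw [this, Finset.card_singleton]
  · apply Finset.sum_congr rfl
    intro n hn
    simp only [Finset.mem_Icc] at hn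
    rw [r2]
    congr 1
    ext ⟨a, b⟩
    simp only [pts, Finset.mem_filter, Finset.mem_product, Finset.mem_Icc]
    constructor
    · rintro ⟨⟨-, hle⟩, h6⟩
      have hx : 0 ≤ a ^ 2 + b ^ 2 := by positivity
      have heq : a ^ 2 + b ^ 2 = (n : ℤ) := by
        rw [← h6, Int.toNat_of_nonneg hx]
      have ha := mem_box_of_sq_le (show a ^ 2 ≤ (n:ℤ) by nlinarith [sq_nonneg b])
      have hb := mem_box_of_sq_le (show b ^ 2 ≤ (n:ℤ) by nlinarith [sq_nonneg a])
      exact ⟨⟨⟨ha.1, ha.2⟩, hb.1, hb.2⟩, heq⟩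
    · rintro ⟨-, h3⟩
      have hN : (n : ℤ) ≤ (N:ℤ) := by exact_mod_cast hn.2
      have ha := mem_box_of_sq_le (show a ^ 2 ≤ (N:ℤ) by nlinarith [sq_nonneg b])
      have hb := mem_box_of_sq_le (show b ^ 2 ≤ (N:ℤ) by nlinarith [sq_nonneg a])
      refine ⟨⟨⟨⟨ha.1, ha.2⟩, hb.1, hb.2⟩, by rw [h3]; exact hN⟩, by rw [h3]; simp⟩

def usq (p : ℤ × ℤ) : Set ℂ :=
  Complex.measurableEquivRealProd ⁻¹'
    (Set.Ioc ((p.1 : ℝ) - 1) (p.1 : ℝ) ×ˢ Set.Ioc ((p.2 : ℝ) - 1) (p.2 : ℝ))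

lemma mem_usq (p : ℤ × ℤ) (z : ℂ) :
    z ∈ usq p ↔ (⌈z.re⌉ = p.1 ∧ ⌈z.im⌉ = p.2) := by
  rw [usq, Set.mem_preimage, Complex.measurableEquivRealProd_apply, Set.mem_prod,
    Set.mem_Ioc, Set.mem_Ioc, Int.ceil_eq_iff, Int.ceil_eq_iff]

lemma measurableSet_usq (p : ℤ × ℤ) : MeasurableSet (usq p) :=
  Complex.measurableEquivRealProd.measurable (measurableSet_Ioc.prod measurableSet_Ioc)

lemma volume_usq (p : ℤ × ℤ) : volume (usq p) = 1 := by
  rw [usq, Complex.volume_preserving_equiv_real_prod.measure_preimage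
    ((measurableSet_Ioc.prod measurableSet_Ioc).nullMeasurableSet)]
  rw [Measure.volume_eq_prod, Measure.prod_prod, Real.volume_Ioc, Real.volume_Ioc]
  norm_num

/-- the complex point corresponding to the lattice point -/
noncomputable def cpt (p : ℤ × ℤ) : ℂ := Complex.mk (p.1 : ℝ) (p.2 : ℝ)

lemma dist_mem_usq {p : ℤ × ℤ} {z : ℂ} (hz : z ∈ usq p) :
    dist z (cpt p) ≤ Real.sqrt 2 := by
  rw [mem_usq] at hz
  rw [Complex.dist_eq, Complex.norm_def, Complex.normSq_apply]
  have hre : z.re - (cpt p).re ∈ Set.Ioc (-1 : ℝ) 0 := by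
    have h1 := Int.le_ceil z.re
    have h2 := Int.ceil_lt_add_one z.re
    rw [hz.1] at h1 h2
    simp only [cpt, Set.mem_Ioc]
    constructor <;> [linarith; linarith]
  have him : z.im - (cpt p).im ∈ Set.Ioc (-1 : ℝ) 0 := by
    have h1 := Int.le_ceil z.im
    have h2 := Int.ceil_lt_add_one z.im
    rw [hz.2] at h1 h2
    simp only [cpt, Set.mem_Ioc]
    constructor <;> [linarith; linarith]
  obtain ⟨hr1, hr2⟩ := hre; obtain ⟨hi1, hi2⟩ := him
  have : (z - cpt p).re = z.re - (cpt p).re := by simp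
  have : (z - cpt p).im = z.im - (cpt p).im := by simp
  apply Real.sqrt_le_sqrt
  simp only [Complex.sub_re, Complex.sub_im]
  nlinarith

lemma abs_cpt_le {N : ℕ} {p : ℤ × ℤ} (hp : p ∈ pts N) :
    ‖cpt p‖ ≤ Real.sqrt N := by
  rw [Complex.norm_def, Complex.normSq_apply]
  apply Real.sqrt_le_sqrt
  simp only [pts, Finset.mem_filter] at hp
  have h := hp.2
  have h' : ((p.1 ^ 2 + p.2 ^ 2 : ℤ) : ℝ) ≤ (N : ℝ) := by exact_mod_cast h
  push_cast at h'
  simp only [cpt]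
  nlinarith [h']

lemma union_subset_ball (N : ℕ) :
    (⋃ p ∈ pts N, usq p) ⊆ closedBall (0 : ℂ) (Real.sqrt N + Real.sqrt 2) := by
  intro z hz
  simp only [Set.mem_iUnion] at hz
  obtain ⟨p, hp, hzp⟩ := hz
  rw [mem_closedBall]
  calc dist z 0 ≤ dist z (cpt p) + dist (cpt p) 0 := dist_triangle z (cpt p) 0
    _ ≤ Real.sqrt 2 + Real.sqrt N := add_le_add (dist_mem_usq hzp)
          (by rw [dist_zero_right]; exact abs_cpt_le hp)
    _ = Real.sqrt N + Real.sqrt 2 := by ring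

lemma ball_subset_union (N : ℕ) :
    ball (0 : ℂ) (Real.sqrt N - Real.sqrt 2) ⊆ ⋃ p ∈ pts N, usq p := by
  intro z hz
  rw [mem_ball, dist_zero_right] at hz
  set p : ℤ × ℤ := (⌈z.re⌉, ⌈z.im⌉) with hp
  have hzp : z ∈ usq p := by rw [mem_usq]; exact ⟨rfl, rfl⟩
  have hd : dist z (cpt p) ≤ Real.sqrt 2 := dist_mem_usq hzp
  have hd' : dist (cpt p) z ≤ Real.sqrt 2 := by rw [dist_comm]; exact hd
  have habs : ‖cpt p‖ < Real.sqrt N := by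
    calc ‖cpt p‖ = dist (cpt p) 0 := by rw [dist_zero_right]
      _ ≤ dist (cpt p) z + dist z 0 := dist_triangle (cpt p) z 0
      _ ≤ Real.sqrt 2 + ‖z‖ := by rw [dist_zero_right]; exact add_le_add hd' le_rfl
      _ < Real.sqrt N := by linarith
  have hsq : ((p.1 ^ 2 + p.2 ^ 2 : ℤ) : ℝ) < N := by
    have h2 : ‖cpt p‖ ^ 2 < Real.sqrt N ^ 2 := by
      apply pow_lt_pow_left₀ habs (norm_nonneg _) (by norm_num)
    rw [Complex.sq_norm, Complex.normSq_apply] at h2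
    rw [Real.sq_sqrt (Nat.cast_nonneg N)] at h2
    simp only [cpt] at h2
    push_cast
    nlinarith [h2]
  have hle : p.1 ^ 2 + p.2 ^ 2 ≤ (N : ℤ) := by exact_mod_cast hsq.le
  have hmem : p ∈ pts N := by
    have ha := mem_box_of_sq_le (show p.1 ^ 2 ≤ (N:ℤ) by nlinarith [sq_nonneg p.2])
    have hb := mem_box_of_sq_le (show p.2 ^ 2 ≤ (N:ℤ) by nlinarith [sq_nonneg p.1])
    simp only [pts, Finset.mem_filter, Finset.mem_product, Finset.mem_Icc]
    exact ⟨⟨⟨ha.1, ha.2⟩, hb.1, hb.2⟩, hle⟩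
  exact Set.mem_biUnion hmem hzp

lemma volume_union (N : ℕ) :
    volume (⋃ p ∈ pts N, usq p) = (pts N).card := by
  rw [measure_biUnion_finset ?_ (fun p _ => measurableSet_usq p)]
  · simp [volume_usq]
  · intro p hp q hq hpq
    rw [Function.onFun, Set.disjoint_left]
    intro z hzp hzq
    rw [mem_usq] at hzp hzq
    exact hpq (Prod.ext (hzp.1 ▸ hzq.1) (hzp.2 ▸ hzq.2))

lemma card_pts_le (N : ℕ) :
    ((pts N).card : ℝ) ≤ (Real.sqrt N + Real.sqrt 2) ^ 2 * Real.pi := by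
  have h : (((pts N).card : ℕ) : ℝ≥0∞) ≤
      ENNReal.ofReal (Real.sqrt N + Real.sqrt 2) ^ 2 * NNReal.pi := by
    rw [← volume_union N, ← Complex.volume_closedBall 0 (Real.sqrt N + Real.sqrt 2)]
    exact measure_mono (union_subset_ball N)
  have h2 := ENNReal.toReal_mono (by simp [ENNReal.mul_ne_top, ENNReal.pow_ne_top]) h
  rw [ENNReal.toReal_natCast, ENNReal.toReal_mul, ENNReal.toReal_pow,
    ENNReal.toReal_ofReal (by positivity), ENNReal.coe_toReal, NNReal.coe_real_pi] at h2
  exact h2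

lemma le_card_pts (N : ℕ) (hN : 2 ≤ N) :
    (Real.sqrt N - Real.sqrt 2) ^ 2 * Real.pi ≤ ((pts N).card : ℝ) := by
  have h : ENNReal.ofReal (Real.sqrt N - Real.sqrt 2) ^ 2 * NNReal.pi ≤
      (((pts N).card : ℕ) : ℝ≥0∞) := by
    rw [← volume_union N, ← Complex.volume_ball 0 (Real.sqrt N - Real.sqrt 2)]
    exact measure_mono (ball_subset_union N)
  have h2 := ENNReal.toReal_mono (by simp [ENNReal.mul_ne_top, ENNReal.pow_ne_top]) h
  rw [ENNReal.toReal_natCast, ENNReal.toReal_mul, ENNReal.toReal_pow,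
    ENNReal.toReal_ofReal ?_, ENNReal.coe_toReal, NNReal.coe_real_pi] at h2
  · exact h2
  · have : Real.sqrt 2 ≤ Real.sqrt N := Real.sqrt_le_sqrt (by exact_mod_cast hN)
    linarith

lemma tendsto_sqrt_atTop : Tendsto Real.sqrt atTop atTop := by
  rw [tendsto_atTop_atTop]
  intro b
  refine ⟨max 0 (b ^ 2), fun a ha => ?_⟩
  have h0 : (0:ℝ) ≤ a := le_trans (le_max_left _ _) ha
  have h1 : b ^ 2 ≤ a := le_trans (le_max_right _ _) ha
  rcases le_or_gt b 0 with hb | hb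
  · exact hb.trans (Real.sqrt_nonneg a)
  · exact (Real.le_sqrt' hb).mpr h1

lemma sqrt_div_self_tendsto : Tendsto (fun x : ℝ => Real.sqrt x / x) atTop (𝓝 0) := by
  have h : (fun x : ℝ => Real.sqrt x / x) =ᶠ[atTop] (fun x => (Real.sqrt x)⁻¹) := by
    filter_upwards [eventually_gt_atTop (0:ℝ)] with x hx
    rw [← Real.mul_self_sqrt hx.le]
    have hs : Real.sqrt x ≠ 0 := by positivity
    field_simp
    rw [Real.sqrt_sq (Real.sqrt_nonneg x)]
  exact Tendsto.congr' h.symm (tendsto_sqrt_atTop.inv_tendsto_atTop)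

lemma aux_tendsto (a b : ℝ) (ha : 0 < a) :
    Tendsto (fun Λ : ℝ => (16 * Real.sqrt (Λ / a) + b) / Λ) atTop (𝓝 0) := by
  have h2 : Tendsto (fun Λ : ℝ => Real.sqrt (Λ / a) / (Λ / a)) atTop (𝓝 0) :=
    sqrt_div_self_tendsto.comp (tendsto_id.atTop_div_const ha)
  have h3 : Tendsto (fun Λ : ℝ => Real.sqrt (Λ / a) / Λ) atTop (𝓝 0) := by
    have heq : ∀ᶠ Λ : ℝ in atTop,
        (1 / a) * (Real.sqrt (Λ / a) / (Λ / a)) = Real.sqrt (Λ / a) / Λ := by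
      filter_upwards [eventually_gt_atTop (0:ℝ)] with Λ hΛ
      field_simp
    have := (h2.const_mul (1 / a))
    rw [mul_zero] at this
    exact Tendsto.congr' heq this
  have h4 : Tendsto (fun Λ : ℝ => b / Λ) atTop (𝓝 0) :=
    tendsto_const_nhds.div_atTop tendsto_id
  have := (h3.const_mul 16).add h4
  rw [mul_zero, add_zero] at this
  apply this.congr
  intro Λ
  ring

lemma sum_r2_est (N : ℕ) (hN : 2 ≤ N) :
    |(∑ n ∈ Finset.Icc 1 N, (r2 n : ℝ)) - Real.pi * N| ≤ 16 * Real.sqrt N + 9 := by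
  have hcard : ((pts N).card : ℝ) = 1 + ∑ n ∈ Finset.Icc 1 N, (r2 n : ℝ) := by
    rw [card_pts]; push_cast; ring
  have hub := card_pts_le N
  have hlb := le_card_pts N hN
  have hs : Real.sqrt N ^ 2 = N := Real.sq_sqrt (Nat.cast_nonneg N)
  have hs2 : Real.sqrt 2 ^ 2 = 2 := Real.sq_sqrt (by norm_num)
  have hsn := Real.sqrt_nonneg (N : ℝ)
  have hs2n := Real.sqrt_nonneg (2 : ℝ)
  have h2 : Real.sqrt 2 ≤ 2 := by nlinarith
  have hπ4 := Real.pi_le_four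
  have hπ0 := Real.pi_gt_three
  have expand1 : (Real.sqrt N + Real.sqrt 2) ^ 2 = (N : ℝ) + 2 * Real.sqrt N * Real.sqrt 2 + 2 := by
    rw [add_sq, hs, hs2]
  have expand2 : (Real.sqrt N - Real.sqrt 2) ^ 2 = (N : ℝ) - 2 * Real.sqrt N * Real.sqrt 2 + 2 := by
    rw [sub_sq, hs, hs2]
  have hcross : 2 * Real.sqrt N * Real.sqrt 2 * Real.pi ≤ 16 * Real.sqrt N := by
    have e1 : Real.sqrt N * Real.sqrt 2 ≤ Real.sqrt N * 2 := mul_le_mul_of_nonneg_left h2 hsn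
    have e2 : Real.sqrt N * Real.sqrt 2 * Real.pi ≤ Real.sqrt N * 2 * 4 :=
      mul_le_mul e1 hπ4 (by linarith) (by positivity)
    linarith
  rw [abs_le]
  constructor <;> nlinarith [hub, hlb, hcard, hcross]

end Aux

/-- `∑_{n=1}^{⌊Λ/(λ+2μ)⌋} r₂(n) = (π/(λ+2μ))Λ + o(Λ)`, whence the difference of the
3D cylinder counting functions satisfies `N_FD(Λ) − N_DF(Λ) = (π/(λ+2μ))Λ + o(Λ)`. -/
theorem NFD3_sub_NDF3 (lam mu h : ℝ) (hmu : 0 < mu) (hlt : mu < lam + 2 * mu)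
    (hh : 0 < h) :
    Tendsto (fun Λ : ℝ =>
      ((∑ n ∈ Finset.Icc 1 ⌊Λ / (lam + 2 * mu)⌋₊, (r2 n : ℝ))
        - Real.pi / (lam + 2 * mu) * Λ) / Λ) atTop (nhds 0) ∧
    Tendsto (fun Λ : ℝ =>
      (NFD3 lam mu h Λ - NDF3 lam mu h Λ - Real.pi / (lam + 2 * mu) * Λ) / Λ)
      atTop (nhds 0) := by
  have hc : 0 < lam + 2 * mu := hmu.trans hlt
  have hmain : Tendsto (fun Λ : ℝ =>
      ((∑ n ∈ Finset.Icc 1 ⌊Λ / (lam + 2 * mu)⌋₊, (r2 n : ℝ))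
        - Real.pi / (lam + 2 * mu) * Λ) / Λ) atTop (nhds 0) := by
    refine squeeze_zero_norm'
      (a := fun Λ : ℝ => (16 * Real.sqrt (Λ / (lam + 2 * mu)) + 13) / Λ) ?_
      (aux_tendsto (lam + 2 * mu) 13 hc)
    filter_upwards [eventually_ge_atTop (max 1 (2 * (lam + 2 * mu)))] with Λ hΛ
    have hm1 : (1 : ℝ) ≤ Λ := le_trans (le_max_left _ _) hΛ
    have hm2 : 2 * (lam + 2 * mu) ≤ Λ := le_trans (le_max_right _ _) hΛ
    have hΛpos : 0 < Λ := lt_of_lt_of_le one_pos hm1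
    set N := ⌊Λ / (lam + 2 * mu)⌋₊ with hNdef
    have hxc : (2 : ℝ) ≤ Λ / (lam + 2 * mu) := (le_div_iff₀ hc).mpr (by linarith)
    have hN2 : 2 ≤ N := Nat.le_floor (by exact_mod_cast hxc)
    have hfl : (N : ℝ) ≤ Λ / (lam + 2 * mu) := Nat.floor_le (by positivity)
    have hfu : Λ / (lam + 2 * mu) < N + 1 := Nat.lt_floor_add_one _
    have hest := sum_r2_est N hN2
    have hsqle : Real.sqrt N ≤ Real.sqrt (Λ / (lam + 2 * mu)) := Real.sqrt_le_sqrt hfl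
    have hπ4 := Real.pi_le_four
    have hπ0 := Real.pi_pos
    rw [Real.norm_eq_abs, abs_div, abs_of_pos hΛpos]
    gcongr
    have htri := abs_sub_le (∑ n ∈ Finset.Icc 1 N, (r2 n : ℝ))
      (Real.pi * N) (Real.pi / (lam + 2 * mu) * Λ)
    have hsecond : |Real.pi * N - Real.pi / (lam + 2 * mu) * Λ| ≤ 4 := by
      have : Real.pi / (lam + 2 * mu) * Λ = Real.pi * (Λ / (lam + 2 * mu)) := by
        field_simp
      rw [this, ← mul_sub, abs_mul, abs_of_pos hπ0]
      have habs : |(N : ℝ) - Λ / (lam + 2 * mu)| ≤ 1 := by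
        rw [abs_le]; constructor <;> linarith
      nlinarith
    linarith
  refine ⟨hmain, ?_⟩
  have : ∀ Λ : ℝ, NFD3 lam mu h Λ - NDF3 lam mu h Λ
      = ∑ n ∈ Finset.Icc 1 ⌊Λ / (lam + 2 * mu)⌋₊, (r2 n : ℝ) := by
    intro Λ
    rw [NFD3]
    ring
  exact hmain.congr (fun Λ => by rw [this Λ])
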